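/- If a utility function u is near-modular with bounded noise, i.e., |u(M) − Σ_{i∈M} x_i| ≤ ξ for all M ⊆ N, then for every datum i, |φ_i(u) − x_i| ≤ 2ξ, and consequently for every subset M of size m, |û(M) − u(M)| ≤ (2m+1)ξ. -/

import Mathlib

open Finset

/-- The Shapley value of datum `i` in feasible set `N` w.r.t. utility function `u`. -/
noncomputable def shapley {ι : Type*} [DecidableEq ι] (N : Finset ι)
    (u : Finset ι → ℝ) (i : ι) : ℝ :=
  ∑ S ∈ (N.erase i).powerset,
    (1 / (N.card : ℝ)) * (u (insert i S) - u S) / ((N.card - 1).choose S.card : ℝ)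

lemma shapley_weight_sum {ι : Type*} [DecidableEq ι] (N : Finset ι) (i : ι) (hi : i ∈ N) :
    ∑ S ∈ (N.erase i).powerset,
      (1 / (N.card : ℝ)) / ((N.card - 1).choose S.card : ℝ) = 1 := by
  have hn : 0 < N.card := card_pos.mpr ⟨i, hi⟩
  have hc : (N.erase i).card = N.card - 1 := card_erase_of_mem hi
  have := Finset.sum_powerset_apply_card
    (f := fun k => (1 / (N.card : ℝ)) / ((N.card - 1).choose k : ℝ)) (x := N.erase i)
  rw [this, hc]
  have h1 : N.card - 1 + 1 = N.card := Nat.succ_pred_eq_of_pos hn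
  have : ∀ m ∈ range (N.card - 1 + 1),
      (N.card - 1).choose m • ((1 / (N.card : ℝ)) / ((N.card - 1).choose m : ℝ))
        = 1 / (N.card : ℝ) := by
    intro m hm
    have hm' : m ≤ N.card - 1 := Nat.lt_succ_iff.mp (mem_range.mp hm)
    have hpos : 0 < (N.card - 1).choose m := Nat.choose_pos hm'
    have hne : ((N.card - 1).choose m : ℝ) ≠ 0 := Nat.cast_ne_zero.mpr hpos.ne'
    rw [nsmul_eq_mul]
    field_simp
  rw [Finset.sum_congr rfl this, Finset.sum_const, h1, nsmul_eq_mul]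
  field_simp
  simp

theorem shapley_near_modular {ι : Type*} [DecidableEq ι] (N : Finset ι)
    (u : Finset ι → ℝ) (x : ι → ℝ) (ξ : ℝ) (hξ : 0 ≤ ξ)
    (hnear : ∀ M ∈ N.powerset, |u M - ∑ i ∈ M, x i| ≤ ξ) :
    (∀ i ∈ N, |shapley N u i - x i| ≤ 2 * ξ) ∧
    (∀ M ∈ N.powerset,
      |(∑ i ∈ M, shapley N u i) - u M| ≤ (2 * (M.card : ℝ) + 1) * ξ) := by
  have key : ∀ i ∈ N, |shapley N u i - x i| ≤ 2 * ξ := by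
    intro i hi
    have hws := shapley_weight_sum N i hi
    set w : Finset ι → ℝ := fun S => (1 / (N.card : ℝ)) / ((N.card - 1).choose S.card : ℝ)
      with hw
    have hwnn : ∀ S, 0 ≤ w S := by
      intro S
      apply div_nonneg (by positivity) (by positivity)
    have hdiff : ∀ S ∈ (N.erase i).powerset, |u (insert i S) - u S - x i| ≤ 2 * ξ := by
      intro S hS
      rw [mem_powerset] at hS
      have hSN : S ⊆ N := hS.trans (erase_subset _ _)
      have hiS : i ∉ S := fun h => (mem_erase.mp (hS h)).1 rfl
      have h1 : |u (insert i S) - ∑ j ∈ insert i S, x j| ≤ ξ :=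
        hnear _ (mem_powerset.mpr (insert_subset hi hSN))
      have h2 : |u S - ∑ j ∈ S, x j| ≤ ξ := hnear _ (mem_powerset.mpr hSN)
      rw [Finset.sum_insert hiS] at h1
      calc |u (insert i S) - u S - x i|
          = |(u (insert i S) - (x i + ∑ j ∈ S, x j)) - (u S - ∑ j ∈ S, x j)| := by ring_nf
        _ ≤ |u (insert i S) - (x i + ∑ j ∈ S, x j)| + |u S - ∑ j ∈ S, x j| := abs_sub _ _
        _ ≤ ξ + ξ := add_le_add h1 h2
        _ = 2 * ξ := by ring
    have heq : shapley N u i - x i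
        = ∑ S ∈ (N.erase i).powerset, (u (insert i S) - u S - x i) * w S := by
      unfold shapley
      have hterm : ∀ S ∈ (N.erase i).powerset, (u (insert i S) - u S - x i) * w S
          = 1 / (N.card : ℝ) * (u (insert i S) - u S) / ((N.card - 1).choose S.card : ℝ)
            - x i * w S := by
        intro S _; rw [hw]; ring
      rw [eq_comm, Finset.sum_congr rfl hterm, Finset.sum_sub_distrib, ← Finset.mul_sum, hws,
        mul_one]
    rw [heq]
    calc |∑ S ∈ (N.erase i).powerset, (u (insert i S) - u S - x i) * w S|
        ≤ ∑ S ∈ (N.erase i).powerset, |(u (insert i S) - u S - x i) * w S| :=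
          Finset.abs_sum_le_sum_abs _ _
      _ ≤ ∑ S ∈ (N.erase i).powerset, (2 * ξ) * w S := by
          apply Finset.sum_le_sum
          intro S hS
          rw [abs_mul, abs_of_nonneg (hwnn S)]
          exact mul_le_mul_of_nonneg_right (hdiff S hS) (hwnn S)
      _ = 2 * ξ := by rw [← Finset.mul_sum, hws, mul_one]
  refine ⟨key, fun M hM => ?_⟩
  rw [mem_powerset] at hM
  have h2 : |u M - ∑ i ∈ M, x i| ≤ ξ := hnear M (mem_powerset.mpr hM)
  calc |(∑ i ∈ M, shapley N u i) - u M|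
      = |(∑ i ∈ M, (shapley N u i - x i)) + ((∑ i ∈ M, x i) - u M)| := by
        rw [Finset.sum_sub_distrib]; ring_nf
    _ ≤ |∑ i ∈ M, (shapley N u i - x i)| + |(∑ i ∈ M, x i) - u M| := abs_add_le _ _
    _ ≤ (∑ i ∈ M, |shapley N u i - x i|) + |u M - ∑ i ∈ M, x i| := by
        rw [abs_sub_comm]
        exact add_le_add (Finset.abs_sum_le_sum_abs _ _) le_rfl
    _ ≤ (∑ _i ∈ M, 2 * ξ) + ξ := by
        refine add_le_add (Finset.sum_le_sum fun i hi => key i (hM hi)) h2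
    _ = (2 * (M.card : ℝ) + 1) * ξ := by rw [Finset.sum_const, nsmul_eq_mul]; ring
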